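/- If C ⊆ V is a Φ_c-valid control set and C' ⊆ V satisfies C ⊆ C', then C' is a Φ_c-valid control set. -/

import Mathlib

open Finset

variable {V : Type*}

/-- Agreement of a configuration on an (unordered) edge. -/
def agreeFun (x : V → Bool) : Sym2 V → Bool :=
  Sym2.lift ⟨fun a b => x a == x b, fun a b => by show (x a == x b) = (x b == x a); cases x a <;> cases x b <;> rfl⟩

/-- The potential of the majority game: number of edges whose endpoints agree. -/
def Phi [Fintype V] [DecidableEq V] (G : SimpleGraph V) [DecidableRel G.Adj]
    (x : V → Bool) : ℕ :=
  (G.edgeFinset.filter (fun e => agreeFun x e = true)).card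

/-- Number of neighbors of `i` playing action `a` in configuration `x`. -/
def nCount [Fintype V] (G : SimpleGraph V) [DecidableRel G.Adj]
    (x : V → Bool) (i : V) (a : Bool) : ℕ :=
  ((G.neighborFinset i).filter (fun j => x j = a)).card

/-- Majority-game utility: number of neighbors agreeing with `i`. -/
def lamC [Fintype V] (G : SimpleGraph V) [DecidableRel G.Adj]
    (x : V → Bool) (i : V) : ℕ :=
  ((G.neighborFinset i).filter (fun j => x j = x i)).card

/-- Minority-game utility: number of neighbors disagreeing with `i`. -/
def lamA [Fintype V] (G : SimpleGraph V) [DecidableRel G.Adj]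
    (x : V → Bool) (i : V) : ℕ :=
  ((G.neighborFinset i).filter (fun j => x j ≠ x i)).card

/-- `x` is a Nash equilibrium of the minority game. -/
def MinorityNE [Fintype V] [DecidableEq V] (G : SimpleGraph V) [DecidableRel G.Adj]
    (x : V → Bool) : Prop :=
  ∀ (i : V) (a : Bool), lamA G (Function.update x i a) i ≤ lamA G x i

/-- A monotone crusade from `C`: starts at the indicator of `C`, ends at all-ones,
and at each step one coordinate outside `C` is flipped from `0` to `1`. -/
def IsCrusade [DecidableEq V] (C : Finset V) (m : ℕ) (xs : ℕ → V → Bool) : Prop :=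
  xs 0 = (fun v => decide (v ∈ C)) ∧ xs m = (fun _ => true) ∧
    ∀ k < m, ∃ i, i ∉ C ∧ xs k i = false ∧ xs (k + 1) = Function.update (xs k) i true

/-- `C` is a `Φ_c`-valid control set: there is a `Φ_c`-adapted monotone crusade from `C`. -/
def ValidControlSet [Fintype V] [DecidableEq V] (G : SimpleGraph V) [DecidableRel G.Adj]
    (C : Finset V) : Prop :=
  ∃ m xs, IsCrusade C m xs ∧ ∀ k < m, Phi G (xs k) ≤ Phi G (xs (k + 1))

/-- `x ∈ Z`: reachable from the all-ones configuration by allowed down-flips. -/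
def InZ [Fintype V] [DecidableEq V] (G : SimpleGraph V) [DecidableRel G.Adj]
    (x : V → Bool) : Prop :=
  ∃ m, ∃ ys : ℕ → V → Bool, ys 0 = (fun _ => true) ∧ ys m = x ∧
    ∀ k < m, ∃ i, ys k i = true ∧ nCount G (ys k) i false ≤ nCount G (ys k) i true ∧
      ys (k + 1) = Function.update (ys k) i false

/-- `‖x‖₁`: number of coordinates equal to `1`. -/
def norm1 [Fintype V] (x : V → Bool) : ℕ :=
  (Finset.univ.filter (fun v => x v = true)).card

lemma edge_ineq [DecidableEq V] (x : V → Bool) (i i' : V) (hne : i ≠ i')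
    (hi : x i = false) (hi' : x i' = false) (e : Sym2 V) :
    (if agreeFun (Function.update x i' true) e = true then 1 else 0) +
      (if agreeFun (Function.update x i true) e = true then 1 else 0) ≤
    (if agreeFun x e = true then 1 else 0) +
      (if agreeFun (Function.update (Function.update x i' true) i true) e = true then 1 else 0) := by
  induction e using Sym2.inductionOn with
  | hf u v =>
    simp only [agreeFun, Sym2.lift_mk, Function.update_apply]
    by_cases hui : u = i <;> by_cases hvi : v = i <;> by_cases hui' : u = i' <;>
      by_cases hvi' : v = i' <;>
      simp only [hui, hvi, hui', hvi', if_pos rfl, if_true, if_neg, hne, hne.symm,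
        Ne.symm hne, if_false, ite_true, ite_false, reduceIte] <;>
      simp_all <;> cases h1 : x u <;> cases h2 : x v <;> simp_all

lemma phi_surgery [Fintype V] [DecidableEq V] (G : SimpleGraph V) [DecidableRel G.Adj]
    (x : V → Bool) (i i' : V) (hne : i ≠ i') (hi : x i = false) (hi' : x i' = false)
    (h : Phi G x ≤ Phi G (Function.update x i' true)) :
    Phi G (Function.update x i true) ≤
      Phi G (Function.update (Function.update x i' true) i true) := by
  have key : Phi G (Function.update x i' true) + Phi G (Function.update x i true) ≤
      Phi G x + Phi G (Function.update (Function.update x i' true) i true) := by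
    simp only [Phi, Finset.card_filter, ← Finset.sum_add_distrib]
    exact Finset.sum_le_sum fun e _ => edge_ineq x i i' hne hi hi' e
  omega

lemma crusade_mono [DecidableEq V] {C : Finset V} {m : ℕ} {xs : ℕ → V → Bool}
    (hstep : ∀ k < m, ∃ i, i ∉ C ∧ xs k i = false ∧ xs (k + 1) = Function.update (xs k) i true)
    {k l : ℕ} (hkl : k ≤ l) (hlm : l ≤ m) {v : V} (hv : xs k v = true) : xs l v = true := by
  induction l with
  | zero => exact (Nat.le_zero.mp hkl ▸ hv)
  | succ n ih =>
    rcases Nat.lt_or_ge k (n+1) with h | h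
    · have hxn : xs n v = true := ih (by omega) (by omega)
      obtain ⟨j, _, _, hupd⟩ := hstep n (by omega)
      rw [hupd, Function.update_apply]
      split <;> simp [hxn]
    · have : k = n + 1 := by omega
      exact this ▸ hv

theorem validControlSet_insert [Fintype V] [DecidableEq V]
    (G : SimpleGraph V) [DecidableRel G.Adj] (C : Finset V) (i : V)
    (hC : ValidControlSet G C) : ValidControlSet G (insert i C) := by
  by_cases hiC : i ∈ C
  · rwa [Finset.insert_eq_self.mpr hiC]
  obtain ⟨m, xs, ⟨h0, hm, hstep⟩, hphi⟩ := hC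
  have hP : ∃ t, xs t i = true := ⟨m, by rw [hm]⟩
  classical
  set k₁ := Nat.find hP with hk₁def
  have hk₁ : xs k₁ i = true := Nat.find_spec hP
  have hx0 : xs 0 i = false := by rw [h0]; simp [hiC]
  have hk₁pos : 0 < k₁ := by
    rcases Nat.eq_zero_or_pos k₁ with h | h
    · rw [h] at hk₁; rw [hx0] at hk₁; exact absurd hk₁ (by simp)
    · exact h
  set k₀ := k₁ - 1 with hk₀def
  have hk₀succ : k₀ + 1 = k₁ := by omega
  have hk₀false : xs k₀ i = false := by
    have := Nat.find_min hP (show k₀ < k₁ by omega)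
    simpa using this
  have hk₁le : k₁ ≤ m := Nat.find_le (by rw [hm])
  have hm1 : 1 ≤ m := by omega
  have hk₀m : k₀ < m := by omega
  obtain ⟨j, hjC, hjf, hjupd⟩ := hstep k₀ hk₀m
  have hji : j = i := by
    by_contra hji
    have h1 : xs (k₀ + 1) i = xs k₀ i := by
      rw [hjupd, Function.update_apply, if_neg (Ne.symm hji)]
    rw [hk₀succ, hk₁, hk₀false] at h1; exact absurd h1 (by simp)
  subst hji
  have hstepk₀ : xs (k₀ + 1) = Function.update (xs k₀) j true := hjupd
  have hfalse_before : ∀ k ≤ k₀, xs k j = false := by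
    intro k hk
    cases h : xs k j
    · rfl
    · have := crusade_mono hstep hk (by omega) h
      rw [hk₀false] at this; exact absurd this (by simp)
  have htrue_after : ∀ k, k₀ + 1 ≤ k → k ≤ m → xs k j = true := fun k h1 h2 =>
    crusade_mono hstep h1 h2 (hk₀succ ▸ (hk₀succ.symm ▸ hk₁ : xs k₁ j = true))
  set ys : ℕ → V → Bool := fun t => Function.update (xs (if t < k₀ then t else t + 1)) j true
    with hysdef
  have hysA : ∀ t ≤ k₀, ys t = Function.update (xs t) j true := by
    intro t ht
    rcases Nat.lt_or_ge t k₀ with h | h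
    · simp [hysdef, h]
    · have ht' : t = k₀ := by omega
      subst ht'
      simp only [hysdef, lt_irrefl, if_false]
      rw [hstepk₀, Function.update_idem]
  have hysB : ∀ t, k₀ ≤ t → t + 1 ≤ m → ys t = xs (t + 1) := by
    intro t ht htm
    rcases Nat.eq_or_lt_of_le ht with h | h
    · rw [← h, hysA k₀ le_rfl, hstepk₀]
    · have hnlt : ¬ t < k₀ := by omega
      simp only [hysdef, hnlt, if_false]
      have hj : xs (t + 1) j = true := htrue_after (t + 1) (by omega) htm
      funext v
      rw [Function.update_apply]
      split
      · next hv => rw [hv, hj]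
      · rfl
  refine ⟨m - 1, ys, ⟨?_, ?_, ?_⟩, ?_⟩
  · rw [hysA 0 (Nat.zero_le _), h0]
    funext v
    rw [Function.update_apply]
    by_cases hv : v = j <;> simp [hv, Finset.mem_insert]
  · rw [hysB (m - 1) (by omega) (by omega)]
    have : m - 1 + 1 = m := by omega
    rw [this, hm]
  · intro k hk
    rcases Nat.lt_or_ge k k₀ with h | h
    · obtain ⟨i', hi'C, hi'f, hupd⟩ := hstep k (by omega)
      have hi'j : i' ≠ j := by
        intro he
        have h1 : xs (k + 1) j = true := by rw [hupd, ← he, Function.update_self]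
        rw [hfalse_before (k + 1) (by omega)] at h1
        exact absurd h1 (by simp)
      refine ⟨i', ?_, ?_, ?_⟩
      · simp [Finset.mem_insert, hi'C, hi'j]
      · rw [hysA k (by omega), Function.update_apply, if_neg hi'j, hi'f]
      · rw [hysA k (by omega), hysA (k + 1) (by omega), hupd,
          Function.update_comm hi'j]
    · obtain ⟨i', hi'C, hi'f, hupd⟩ := hstep (k + 1) (by omega)
      have hi'j : i' ≠ j := by
        intro he
        have := htrue_after (k + 1) (by omega) (by omega)
        rw [← he, hi'f] at this
        exact absurd this (by simp)
      refine ⟨i', ?_, ?_, ?_⟩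
      · simp [Finset.mem_insert, hi'C, hi'j]
      · rw [hysB k h (by omega), hi'f]
      · rw [hysB k h (by omega), hysB (k + 1) (by omega) (by omega), hupd]
  · intro k hk
    rcases Nat.lt_or_ge k k₀ with h | h
    · obtain ⟨i', hi'C, hi'f, hupd⟩ := hstep k (by omega)
      have hi'j : i' ≠ j := by
        intro he
        have h1 : xs (k + 1) j = true := by rw [hupd, ← he, Function.update_self]
        rw [hfalse_before (k + 1) (by omega)] at h1
        exact absurd h1 (by simp)
      rw [hysA k (by omega), hysA (k + 1) (by omega), hupd]
      exact phi_surgery G (xs k) j i' (Ne.symm hi'j) (hfalse_before k (by omega)) hi'f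
        (by rw [← hupd]; exact hphi k (by omega))
    · rw [hysB k h (by omega), hysB (k + 1) (by omega) (by omega)]
      exact hphi (k + 1) (by omega)


/-- a superset of a `Φ_c`-valid control set is a `Φ_c`-valid control set. -/
theorem validControlSet_superset [Fintype V] [DecidableEq V]
    (G : SimpleGraph V) [DecidableRel G.Adj] (C C' : Finset V)
    (hC : ValidControlSet G C) (hsub : C ⊆ C') :
    ValidControlSet G C' := by
  classical
  have key : ∀ s : Finset V, ValidControlSet G (C ∪ s) := by
    intro s
    induction s using Finset.induction_on with
    | empty => simpa using hC
    | insert _ _ h ih =>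
      rw [Finset.union_insert]
      exact validControlSet_insert G _ _ ih
  have := key C'
  rwa [Finset.union_eq_right.mpr hsub] at this
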